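/- arXiv:2308.07696 — 3 statements merged into one kernel-verified Lean document; each statement's English description precedes it below -/
import Mathlib

section
/- Fix c > 0. There exist a constant C₀ > 0 and N₀ such that for every odd integer N ≥ N₀ and every vertex v ∈ V_N, the sum Σ_{u ∈ V_N} p(v,u) satisfies |Σ_{u ∈ V_N} p(v,u) − (4c·log 2 − 2c/N − c/N²)| ≤ C₀/N⁴. -/
open scoped BigOperators

/-- Vertices of the discrete 2-dimensional torus. -/
abbrev Vtx (N : ℕ) : Type := ZMod N × ZMod N

/-- `ρ_N(i)`: for a residue represented in `{0,…,N−1}`, `ρ_N(i) = i` if `i ≤ N/2`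
and `ρ_N(i) = N − i` otherwise. -/
def rhoN (N : ℕ) (i : ZMod N) : ℕ :=
  if 2 * i.val ≤ N then i.val else N - i.val

/-- Torus distance `ρ(u,v) = ρ_N(u₁ − v₁) + ρ_N(u₂ − v₂)`. -/
def torusDist (N : ℕ) (u v : Vtx N) : ℕ :=
  rhoN N (u.1 - v.1) + rhoN N (u.2 - v.2)

/-- Connection probability `p(u,v) = min(c/(N·ρ(u,v)), 1)` for `u ≠ v`, `p(u,u) = 0`. -/
noncomputable def edgeProb (N : ℕ) (c : ℝ) (u v : Vtx N) : ℝ :=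
  if u = v then 0 else min (c / ((N : ℝ) * (torusDist N u v : ℝ))) 1

open Finset Filter Real

lemma sum_zmod_rho (N M : ℕ) [NeZero N] (h : N = 2*M+1) (f : ℕ → ℝ) :
    ∑ x : ZMod N, f (rhoN N x) = f 0 + 2 * ∑ r ∈ Finset.Icc 1 M, f r := by
  have h1 : ∑ x : ZMod N, f (rhoN N x) = ∑ i ∈ Finset.range N, f (if 2*i ≤ N then i else N - i) := by
    refine Finset.sum_nbij' (fun x => ZMod.val x) (fun i => (i : ZMod N)) ?_ ?_ ?_ ?_ ?_
    · intro x _; exact Finset.mem_range.2 (ZMod.val_lt x)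
    · intro i _; exact Finset.mem_univ _
    · intro x _; exact ZMod.natCast_rightInverse x
    · intro i hi; exact ZMod.val_cast_of_lt (Finset.mem_range.1 hi)
    · intro x _; rfl
  rw [h1]
  have h2 : Finset.range N = Finset.range (M+1) ∪ Finset.Ico (M+1) N := by
    rw [Finset.range_eq_Ico, Finset.range_eq_Ico]
    exact (Finset.Ico_union_Ico_eq_Ico (by omega : 0 ≤ M+1) (by omega : M+1 ≤ N)).symm
  rw [h2, Finset.sum_union (by
    rw [Finset.range_eq_Ico]; exact Finset.Ico_disjoint_Ico_consecutive 0 (M+1) N)]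
  have h3 : ∑ i ∈ Finset.range (M+1), f (if 2*i ≤ N then i else N - i)
      = f 0 + ∑ r ∈ Finset.Icc 1 M, f r := by
    rw [Finset.range_eq_Ico, ← Finset.Ico_add_one_right_eq_Icc (a := 1),
      Finset.sum_eq_sum_Ico_succ_bot (by omega)]
    congr 1
    · apply Finset.sum_congr rfl
      intro i hi
      simp only [Finset.mem_Ico] at hi
      rw [if_pos (by omega)]
  have h4 : ∑ i ∈ Finset.Ico (M+1) N, f (if 2*i ≤ N then i else N - i)
      = ∑ r ∈ Finset.Icc 1 M, f r := by
    refine Finset.sum_nbij' (fun i => N - i) (fun r => N - r) ?_ ?_ ?_ ?_ ?_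
    · intro i hi; simp only [Finset.mem_Ico] at hi; simp only [Finset.mem_Icc]; omega
    · intro r hr; simp only [Finset.mem_Icc] at hr; simp only [Finset.mem_Ico]; omega
    · intro i hi; simp only [Finset.mem_Ico] at hi; omega
    · intro r hr; simp only [Finset.mem_Icc] at hr; omega
    · intro i hi; simp only [Finset.mem_Ico] at hi; rw [if_neg (by omega)]
  rw [h3, h4]; ring

lemma rhoN_eq_zero_iff (N : ℕ) [NeZero N] (x : ZMod N) : rhoN N x = 0 ↔ x = 0 := by
  have hv := ZMod.val_lt x
  unfold rhoN
  split_ifs with h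
  · rw [ZMod.val_eq_zero]
  · constructor
    · omega
    · intro hx; subst hx; simp only [ZMod.val_zero, Nat.mul_zero] at h; omega

lemma sum_edgeProb_eq (N M : ℕ) [NeZero N] (h : N = 2*M+1) (c : ℝ) (hc : 0 < c)
    (hcN : c ≤ N) (v : Vtx N) :
    ∑ u : Vtx N, edgeProb N c v u
      = 4*c/N * ((∑ i ∈ Finset.Icc 1 M, (1:ℝ)/i)
          + ∑ i ∈ Finset.Icc 1 M, ∑ j ∈ Finset.Icc 1 M, (1:ℝ)/(i+j)) := by
  have hN0 : (0:ℝ) < N := by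
    have := Nat.pos_of_ne_zero (NeZero.ne N); exact_mod_cast this
  set F : ℕ → ℝ := fun k => if k = 0 then 0 else c / ((N:ℝ) * k) with hF
  have hpt : ∀ w : Vtx N, edgeProb N c v (v - w) = F (rhoN N w.1 + rhoN N w.2) := by
    intro w
    have hdist : torusDist N v (v - w) = rhoN N w.1 + rhoN N w.2 := by
      unfold torusDist
      simp [Prod.fst_sub, Prod.snd_sub, sub_sub_cancel]
    unfold edgeProb
    rw [hdist]
    by_cases hw : w = 0
    · subst hw
      rw [if_pos (by simp), hF]
      have h0 : rhoN N (0 : ZMod N) = 0 := (rhoN_eq_zero_iff N 0).2 rfl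
      simp [h0]
    · have hne : rhoN N w.1 + rhoN N w.2 ≠ 0 := by
        intro hcon
        apply hw
        have h1 : rhoN N w.1 = 0 := by omega
        have h2 : rhoN N w.2 = 0 := by omega
        rw [rhoN_eq_zero_iff] at h1 h2
        exact Prod.ext h1 h2
      rw [if_neg (by
        intro hcon
        exact hw (sub_eq_self.mp hcon.symm)), hF]
      simp only [if_neg hne]
      have hk1 : (1:ℝ) ≤ (rhoN N w.1 + rhoN N w.2 : ℕ) := by
        have : 1 ≤ rhoN N w.1 + rhoN N w.2 := Nat.one_le_iff_ne_zero.2 hne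
        exact_mod_cast this
      rw [min_eq_left]
      apply div_le_one_of_le₀
      · calc c ≤ (N:ℝ) := hcN
          _ = (N:ℝ) * 1 := by ring
          _ ≤ (N:ℝ) * (rhoN N w.1 + rhoN N w.2 : ℕ) := by
              apply mul_le_mul_of_nonneg_left hk1 (le_of_lt hN0)
      · positivity
  have hstep : ∑ u : Vtx N, edgeProb N c v u
      = ∑ w : Vtx N, F (rhoN N w.1 + rhoN N w.2) := by
    rw [← (Equiv.subLeft v).sum_comp (edgeProb N c v)]
    apply Finset.sum_congr rfl
    intro w _
    rw [Equiv.subLeft_apply]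
    exact hpt w
  rw [hstep, Fintype.sum_prod_type]
  have hinner : ∀ x : ZMod N, ∑ y : ZMod N, F (rhoN N x + rhoN N y)
      = F (rhoN N x) + 2 * ∑ j ∈ Finset.Icc 1 M, F (rhoN N x + j) := by
    intro x
    simpa using sum_zmod_rho N M h (fun r => F (rhoN N x + r))
  calc ∑ x : ZMod N, ∑ y : ZMod N, F (rhoN N x + rhoN N y)
      = ∑ x : ZMod N, (F (rhoN N x) + 2 * ∑ j ∈ Finset.Icc 1 M, F (rhoN N x + j)) := by
        exact Finset.sum_congr rfl (fun x _ => hinner x)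
    _ = (∑ x : ZMod N, F (rhoN N x))
        + 2 * ∑ x : ZMod N, ∑ j ∈ Finset.Icc 1 M, F (rhoN N x + j) := by
        rw [Finset.sum_add_distrib, Finset.mul_sum]
    _ = (F 0 + 2 * ∑ r ∈ Finset.Icc 1 M, F r)
        + 2 * ((∑ j ∈ Finset.Icc 1 M, F (0 + j))
            + 2 * ∑ r ∈ Finset.Icc 1 M, ∑ j ∈ Finset.Icc 1 M, F (r + j)) := by
        rw [sum_zmod_rho N M h F, sum_zmod_rho N M h (fun r => ∑ j ∈ Finset.Icc 1 M, F (r + j))]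
    _ = 4*c/N * ((∑ i ∈ Finset.Icc 1 M, (1:ℝ)/i)
          + ∑ i ∈ Finset.Icc 1 M, ∑ j ∈ Finset.Icc 1 M, (1:ℝ)/(i+j)) := by
        have hF0 : F 0 = 0 := by simp [hF]
        have hFr : ∀ r ∈ Finset.Icc 1 M, F r = c/N * (1/(r:ℝ)) := by
          intro r hr
          simp only [Finset.mem_Icc] at hr
          rw [hF]
          simp only [if_neg (by omega : r ≠ 0)]
          field_simp
        have e1 : ∑ r ∈ Finset.Icc 1 M, F r = c/N * ∑ i ∈ Finset.Icc 1 M, (1:ℝ)/i := by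
          rw [Finset.mul_sum]; exact Finset.sum_congr rfl hFr
        have e2 : ∑ j ∈ Finset.Icc 1 M, F (0 + j) = c/N * ∑ i ∈ Finset.Icc 1 M, (1:ℝ)/i := by
          rw [Finset.mul_sum]
          apply Finset.sum_congr rfl
          intro j hj
          rw [zero_add]
          exact hFr j hj
        have e3 : ∑ r ∈ Finset.Icc 1 M, ∑ j ∈ Finset.Icc 1 M, F (r + j)
            = c/N * ∑ i ∈ Finset.Icc 1 M, ∑ j ∈ Finset.Icc 1 M, (1:ℝ)/(i+j) := by
          rw [Finset.mul_sum]
          apply Finset.sum_congr rfl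
          intro i hi
          rw [Finset.mul_sum]
          apply Finset.sum_congr rfl
          intro j hj
          simp only [Finset.mem_Icc] at hi hj
          rw [hF]
          simp only [if_neg (by omega : i + j ≠ 0)]
          push_cast
          field_simp
        rw [hF0, e1, e2, e3]
        ring

lemma shift_sum (a b : ℕ) (f : ℕ → ℝ) :
    ∑ k ∈ Icc (a+1) (a+b), f k = ∑ j ∈ Icc 1 b, f (a + j) := by
  rw [← Finset.map_add_left_Icc 1 b a, Finset.sum_map]
  simp [addLeftEmbedding_apply]

lemma bot_split (a b : ℕ) (hab : a ≤ b) (f : ℕ → ℝ) :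
    ∑ k ∈ Icc a b, f k = f a + ∑ k ∈ Icc (a+1) b, f k := by
  rw [← Finset.Ico_add_one_right_eq_Icc, Finset.sum_eq_sum_Ico_succ_bot (by omega), Finset.Ico_add_one_right_eq_Icc]

noncomputable def hf : ℕ → ℝ := fun k => 1/(k:ℝ)

lemma key_identity' (M : ℕ) :
    (∑ i ∈ Icc 1 M, hf i) + ∑ i ∈ Icc 1 M, ∑ j ∈ Icc 1 M, hf (i+j)
      = (2*(M:ℝ)+1) * ∑ k ∈ Icc (M+1) (2*M), hf k := by
  induction M with
  | zero => simp
  | succ M ih =>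
    set Q : ℝ := ∑ k ∈ Icc (M+2) (2*M+1), hf k with hQ
    have hm1 : ((M:ℝ)+1) ≠ 0 := by positivity
    have h2m1 : (2*(M:ℝ)+1) ≠ 0 := by positivity
    have h2m2 : (2*(M:ℝ)+2) ≠ 0 := by positivity
    have hrow : ∑ j ∈ Icc 1 (M+1), hf ((M+1) + j) = Q + 1/(2*(M:ℝ)+2) := by
      rw [← shift_sum (M+1) (M+1) hf, show M+1+(M+1) = (2*M+1)+1 from by ring,
        show (M+1)+1 = (M+2) from by ring, Finset.sum_Icc_succ_top (by omega)]
      congr 1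
      unfold hf; push_cast; ring
    have hcol : ∑ i ∈ Icc 1 M, hf (i + (M+1)) = Q := by
      have h := shift_sum (M+1) M hf
      rw [show M+1+M = 2*M+1 from by ring, show (M+1)+1 = M+2 from by ring] at h
      rw [hQ, h]
      apply Finset.sum_congr rfl
      intro i hi
      congr 1
      omega
    have hSm1 : ∑ k ∈ Icc (M+1+1) (2*(M+1)), hf k = Q + 1/(2*(M:ℝ)+2) := by
      rw [show 2*(M+1) = (2*M+1)+1 from by ring, Finset.sum_Icc_succ_top (by omega)]
      congr 1
      unfold hf; push_cast; ring
    have hSmM : ∑ k ∈ Icc (M+1) (2*M), hf k = 1/((M:ℝ)+1) + Q - 1/(2*(M:ℝ)+1) := by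
      have h1 := Finset.sum_Icc_succ_top (f := hf) (a := M+1) (b := 2*M) (by omega)
      have h2 : ∑ k ∈ Icc (M+1) (2*M+1), hf k = hf (M+1) + Q := by
        rw [bot_split (M+1) (2*M+1) (by omega), hQ]
      have c1 : hf (2*M+1) = 1/(2*(M:ℝ)+1) := by unfold hf; push_cast; ring
      have c2 : hf (M+1) = 1/((M:ℝ)+1) := by unfold hf; push_cast; ring
      rw [c1] at h1; rw [c2] at h2
      linarith
    have hH : ∑ i ∈ Icc 1 (M+1), hf i = (∑ i ∈ Icc 1 M, hf i) + 1/((M:ℝ)+1) := by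
      rw [Finset.sum_Icc_succ_top (by omega)]
      congr 1
      unfold hf; push_cast; ring
    have hA : ∑ i ∈ Icc 1 (M+1), ∑ j ∈ Icc 1 (M+1), hf (i+j)
        = (∑ i ∈ Icc 1 M, ∑ j ∈ Icc 1 M, hf (i+j)) + Q + (Q + 1/(2*(M:ℝ)+2)) := by
      rw [Finset.sum_Icc_succ_top (by omega)]
      have hin : ∀ i ∈ Icc 1 M, ∑ j ∈ Icc 1 (M+1), hf (i+j)
          = (∑ j ∈ Icc 1 M, hf (i+j)) + hf (i+(M+1)) := by
        intro i hi
        exact Finset.sum_Icc_succ_top (by omega) _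
      rw [Finset.sum_congr rfl hin, Finset.sum_add_distrib, hcol]
      rw [hrow]
    rw [hSmM] at ih
    rw [hH, hA, hSm1]
    push_cast
    have hhalf : (1:ℝ)/(2*(M:ℝ)+2) = 1/2 * (1/((M:ℝ)+1)) := by
      rw [show (2*(M:ℝ)+2) = 2*((M:ℝ)+1) from by ring]
      rw [one_div, mul_inv]
      ring
    rw [hhalf]
    have ha : ((M:ℝ)+1) * (1/((M:ℝ)+1)) = 1 := by field_simp
    have hb : (2*(M:ℝ)+1) * (1/(2*(M:ℝ)+1)) = 1 := by field_simp
    linear_combination ih + ha - hb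

noncomputable def Sm (M : ℕ) : ℝ := ∑ k ∈ Icc (M+1) (2*M), hf k

noncomputable def Dseq (M : ℕ) : ℝ :=
  Sm M + 1/(2*(2*(M:ℝ)+1)) + 1/(4*(2*(M:ℝ)+1)^2)

lemma Sm_top (M : ℕ) :
    Sm (M+1) = (∑ k ∈ Icc (M+2) (2*M+1), hf k) + 1/(2*(M:ℝ)+2) := by
  unfold Sm
  rw [show 2*(M+1) = (2*M+1)+1 from by ring, show M+1+1 = M+2 from rfl,
    Finset.sum_Icc_succ_top (by omega)]
  congr 1
  unfold hf; push_cast; ring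

lemma Sm_bot (M : ℕ) :
    Sm M = 1/((M:ℝ)+1) + (∑ k ∈ Icc (M+2) (2*M+1), hf k) - 1/(2*(M:ℝ)+1) := by
  unfold Sm
  have h1 := Finset.sum_Icc_succ_top (f := hf) (a := M+1) (b := 2*M) (by omega)
  have h2 : ∑ k ∈ Icc (M+1) (2*M+1), hf k
      = hf (M+1) + ∑ k ∈ Icc (M+2) (2*M+1), hf k := by
    rw [bot_split (M+1) (2*M+1) (by omega)]
  have c1 : hf (2*M+1) = 1/(2*(M:ℝ)+1) := by unfold hf; push_cast; ring
  have c2 : hf (M+1) = 1/((M:ℝ)+1) := by unfold hf; push_cast; ring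
  rw [c1] at h1; rw [c2] at h2
  linarith

lemma Dseq_step (M : ℕ) (hM : 1 ≤ M) :
    |Dseq (M+1) - Dseq M| ≤ 1/4 * (1/(M:ℝ)^4 - 1/((M:ℝ)+1)^4) := by
  have hx : (1:ℝ) ≤ (M:ℝ) := by exact_mod_cast hM
  set x : ℝ := (M:ℝ) with hxdef
  have hx0 : (0:ℝ) < x := by linarith
  have key : Dseq (M+1) - Dseq M
      = -(1/((2*x+1)^2*(2*x+2)*(2*x+3)^2)) := by
    unfold Dseq
    rw [Sm_top M, Sm_bot M]
    push_cast
    have e1 : (2*x+1) ≠ 0 := by positivity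
    have e2 : (2*x+2) ≠ 0 := by positivity
    have e3 : (2*x+3) ≠ 0 := by positivity
    have e4 : (x+1) ≠ 0 := by positivity
    field_simp
    ring
  rw [key, abs_neg, abs_of_nonneg (by positivity)]
  have hA : (32:ℝ)*x^5 ≤ (2*x+1)^2*(2*x+2)*(2*x+3)^2 := by nlinarith [sq_nonneg x, sq_nonneg (x+1)]
  have h1 : 1/((2*x+1)^2*(2*x+2)*(2*x+3)^2) ≤ 1/(32*x^5) := by
    apply one_div_le_one_div_of_le (by positivity) hA
  have h2 : 1/(32*x^5) ≤ 1/4 * (1/x^4 - 1/(x+1)^4) := by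
    have hfrac : 1/4 * (1/x^4 - 1/(x+1)^4) = ((x+1)^4 - x^4)/(4*x^4*(x+1)^4) := by
      rw [eq_div_iff (by positivity)]
      field_simp
    rw [hfrac, div_le_div_iff₀ (by positivity) (by positivity)]
    nlinarith [pow_le_pow_left₀ (by linarith : (0:ℝ) ≤ x+1) (by linarith : x+1 ≤ 2*x) 4,
      sq_nonneg x, sq_nonneg (x-1)]
  linarith

lemma Dseq_tele (M : ℕ) (hM : 1 ≤ M) (K : ℕ) :
    |Dseq (M+K) - Dseq M| ≤ 1/4 * (1/(M:ℝ)^4 - 1/((M:ℝ)+(K:ℝ))^4) := by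
  induction K with
  | zero => simp
  | succ K ih =>
    have step := Dseq_step (M+K) (by omega)
    have tri : |Dseq (M+(K+1)) - Dseq M|
        ≤ |Dseq ((M+K)+1) - Dseq (M+K)| + |Dseq (M+K) - Dseq M| := by
      rw [show M+(K+1) = (M+K)+1 from by ring]
      exact abs_sub_le _ _ _
    have cast1 : ((M+K : ℕ):ℝ) = (M:ℝ)+(K:ℝ) := by push_cast; ring
    rw [cast1] at step
    push_cast
    push_cast at ih
    rw [show (M:ℝ)+((K:ℝ)+1) = (M:ℝ)+(K:ℝ)+1 from by ring]
    linarith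

lemma log_diff_le (x : ℝ) (hx : 0 < x) : Real.log (x+1) - Real.log x ≤ 1/x := by
  rw [← Real.log_div (by positivity) (ne_of_gt hx)]
  have h := Real.log_le_sub_one_of_pos (show 0 < (x+1)/x by positivity)
  have : (x+1)/x - 1 = 1/x := by field_simp; ring
  linarith

lemma log_diff_ge (x : ℝ) (hx : 0 < x) : 1/(x+1) ≤ Real.log (x+1) - Real.log x := by
  have h := Real.log_le_sub_one_of_pos (show 0 < x/(x+1) by positivity)
  rw [Real.log_div (ne_of_gt hx) (by positivity)] at h
  have : x/(x+1) - 1 = -(1/(x+1)) := by field_simp; ring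
  linarith

lemma Sm_range (M : ℕ) : Sm M = ∑ i ∈ Finset.range M, hf (M+1+i) := by
  unfold Sm
  refine Finset.sum_nbij' (fun k => k - (M+1)) (fun i => M+1+i) ?_ ?_ ?_ ?_ ?_
  · intro k hk; simp only [Finset.mem_Icc] at hk; simp only [Finset.mem_range]; omega
  · intro i hi; simp only [Finset.mem_range] at hi; simp only [Finset.mem_Icc]; omega
  · intro k hk; simp only [Finset.mem_Icc] at hk; show M+1+(k-(M+1)) = k; omega
  · intro i hi; simp only [Finset.mem_range] at hi; show M+1+i-(M+1) = i; omega
  · intro k hk; simp only [Finset.mem_Icc] at hk; show hf k = hf (M+1+(k-(M+1))); congr 1; omega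

lemma Sm_le_log2 (M : ℕ) (hM : 1 ≤ M) : Sm M ≤ Real.log 2 := by
  rw [Sm_range]
  have key : ∑ i ∈ Finset.range M, hf (M+1+i)
      ≤ ∑ i ∈ Finset.range M, (Real.log ((M:ℝ)+(i+1:ℕ)) - Real.log ((M:ℝ)+(i:ℕ))) := by
    apply Finset.sum_le_sum
    intro i _
    have hx : (0:ℝ) < (M:ℝ)+(i:ℕ) := by
      have : (1:ℝ) ≤ (M:ℝ) := by exact_mod_cast hM
      positivity
    have h := log_diff_ge ((M:ℝ)+(i:ℕ)) hx
    have e1 : (M:ℝ)+(i:ℕ)+1 = (M:ℝ)+((i+1:ℕ):ℝ) := by push_cast; ring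
    have e2 : hf (M+1+i) = 1/((M:ℝ)+(i:ℕ)+1) := by
      unfold hf; push_cast; ring_nf
    rw [e2, ← e1] at *
    linarith
  have tele : ∑ i ∈ Finset.range M, (Real.log ((M:ℝ)+(i+1:ℕ)) - Real.log ((M:ℝ)+(i:ℕ)))
      = Real.log ((M:ℝ)+(M:ℕ)) - Real.log ((M:ℝ)+(0:ℕ)) :=
    Finset.sum_range_sub (fun i => Real.log ((M:ℝ)+(i:ℕ))) M
  have hM1 : (1:ℝ) ≤ (M:ℝ) := by exact_mod_cast hM
  have final : Real.log ((M:ℝ)+(M:ℕ)) - Real.log ((M:ℝ)+(0:ℕ)) = Real.log 2 := by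
    push_cast
    rw [show (M:ℝ)+(M:ℝ) = 2*(M:ℝ) from by ring, add_zero,
      Real.log_mul (by norm_num) (by linarith)]
    ring
  linarith

lemma Sm_ge (M : ℕ) (hM : 1 ≤ M) : Real.log 2 - 1/(2*(M:ℝ)+1) ≤ Sm M := by
  rw [Sm_range]
  have hM1 : (1:ℝ) ≤ (M:ℝ) := by exact_mod_cast hM
  have key : ∑ i ∈ Finset.range M, (Real.log ((M:ℝ)+1+(i+1:ℕ)) - Real.log ((M:ℝ)+1+(i:ℕ)))
      ≤ ∑ i ∈ Finset.range M, hf (M+1+i) := by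
    apply Finset.sum_le_sum
    intro i _
    have hx : (0:ℝ) < (M:ℝ)+1+(i:ℕ) := by positivity
    have h := log_diff_le ((M:ℝ)+1+(i:ℕ)) hx
    have e1 : (M:ℝ)+1+(i:ℕ)+1 = (M:ℝ)+1+((i+1:ℕ):ℝ) := by push_cast; ring
    have e2 : hf (M+1+i) = 1/((M:ℝ)+1+(i:ℕ)) := by
      unfold hf; push_cast; ring_nf
    rw [e2, ← e1]
    linarith
  have tele : ∑ i ∈ Finset.range M, (Real.log ((M:ℝ)+1+(i+1:ℕ)) - Real.log ((M:ℝ)+1+(i:ℕ)))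
      = Real.log ((M:ℝ)+1+(M:ℕ)) - Real.log ((M:ℝ)+1+(0:ℕ)) :=
    Finset.sum_range_sub (fun i => Real.log ((M:ℝ)+1+(i:ℕ))) M
  have final : Real.log 2 - 1/(2*(M:ℝ)+1)
      ≤ Real.log ((M:ℝ)+1+(M:ℕ)) - Real.log ((M:ℝ)+1+(0:ℕ)) := by
    push_cast
    rw [add_zero]
    have h2 : Real.log (2*(M:ℝ)+2) = Real.log 2 + Real.log ((M:ℝ)+1) := by
      rw [show 2*(M:ℝ)+2 = 2*((M:ℝ)+1) from by ring,
        Real.log_mul (by norm_num) (by linarith)]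
    have h3 := log_diff_le (2*(M:ℝ)+1) (by linarith)
    rw [show 2*(M:ℝ)+1+1 = 2*(M:ℝ)+2 from by ring] at h3
    rw [show (M:ℝ)+1+(M:ℝ) = 2*(M:ℝ)+1 from by ring]
    linarith
  rw [tele] at key
  exact le_trans final key

lemma Dseq_near (M : ℕ) (hM : 1 ≤ M) : |Dseq M - Real.log 2| ≤ 1/(2*(M:ℝ)+1) := by
  have hM1 : (1:ℝ) ≤ (M:ℝ) := by exact_mod_cast hM
  have h1 := Sm_le_log2 M hM
  have h2 := Sm_ge M hM
  set y : ℝ := 2*(M:ℝ)+1 with hy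
  have e1 : (0:ℝ) < y := by rw [hy]; linarith
  have hq : (1:ℝ) ≤ y := by rw [hy]; linarith
  have t2 : 1/(4*y^2) ≤ 1/(2*y) := by
    apply one_div_le_one_div_of_le (by positivity)
    nlinarith
  have t3 : 1/(2*y) + 1/(2*y) = 1/y := by
    field_simp
    norm_num
  have hbl : (0:ℝ) ≤ 1/(2*y) := by positivity
  have hbl2 : (0:ℝ) ≤ 1/(4*y^2) := by positivity
  unfold Dseq
  rw [abs_le]
  constructor
  · linarith
  · linarith

lemma Dseq_tendsto : Filter.Tendsto Dseq Filter.atTop (nhds (Real.log 2)) := by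
  have hmono : Filter.Tendsto (fun M : ℕ => 2*(M:ℝ)+1) Filter.atTop Filter.atTop :=
    Filter.tendsto_atTop_add_const_right _ 1
      (Filter.Tendsto.const_mul_atTop (by norm_num) tendsto_natCast_atTop_atTop)
  have hnull : Filter.Tendsto (fun M : ℕ => 1/(2*(M:ℝ)+1)) Filter.atTop (nhds 0) := by
    simpa [one_div, Function.comp_def] using tendsto_inv_atTop_zero.comp hmono
  rw [tendsto_iff_dist_tendsto_zero]
  refine squeeze_zero' (Filter.Eventually.of_forall (fun M => dist_nonneg)) ?_ hnull
  filter_upwards [Filter.eventually_ge_atTop 1] with M hM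
  rw [Real.dist_eq]
  exact Dseq_near M hM

lemma Dseq_close (M : ℕ) (hM : 1 ≤ M) : |Dseq M - Real.log 2| ≤ 1/4 * (1/(M:ℝ)^4) := by
  have hM1 : (1:ℝ) ≤ (M:ℝ) := by exact_mod_cast hM
  have hcomp : Filter.Tendsto (fun K : ℕ => M + K) Filter.atTop Filter.atTop := by
    simpa [add_comm] using Filter.tendsto_add_atTop_nat M
  have h8 : Filter.Tendsto (fun K => Dseq (M+K)) Filter.atTop (nhds (Real.log 2)) :=
    Dseq_tendsto.comp hcomp
  have h9 : Filter.Tendsto (fun K => |Dseq (M+K) - Dseq M|) Filter.atTop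
      (nhds (|Real.log 2 - Dseq M|)) := (h8.sub_const _).abs
  rw [abs_sub_comm]
  apply le_of_tendsto h9
  apply Filter.Eventually.of_forall
  intro K
  refine le_trans (Dseq_tele M hM K) ?_
  have : (0:ℝ) ≤ 1/((M:ℝ)+(K:ℝ))^4 := by positivity
  linarith


/-- For `c > 0` there are `C₀ > 0` and `N₀` such that for every odd `N ≥ N₀` and every
vertex `v`, `|Σ_{u} p(v,u) − (4c·log 2 − 2c/N − c/N²)| ≤ C₀/N⁴`. -/
theorem stmt2 (c : ℝ) (hc : 0 < c) :
    ∃ C₀ : ℝ, 0 < C₀ ∧ ∃ N₀ : ℕ, ∀ (N : ℕ) [NeZero N], N₀ ≤ N → Odd N →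
      ∀ v : Vtx N,
        |(∑ u : Vtx N, edgeProb N c v u) -
            (4 * c * Real.log 2 - 2 * c / (N : ℝ) - c / (N : ℝ) ^ 2)| ≤
          C₀ / (N : ℝ) ^ 4 := by
  refine ⟨81*c, by positivity, ⌈c⌉₊ + 3, ?_⟩
  intro N _ hN hodd v
  obtain ⟨M, hM⟩ := hodd
  have hM1 : 1 ≤ M := by omega
  have hcN : c ≤ (N : ℝ) := by
    calc c ≤ (⌈c⌉₊ : ℝ) := Nat.le_ceil c
      _ ≤ (N : ℝ) := by exact_mod_cast le_trans (by omega) hN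
  have hNr : (N : ℝ) = 2*(M:ℝ)+1 := by rw [hM]; push_cast; ring
  have hN0 : (0:ℝ) < (N:ℝ) := by rw [hNr]; positivity
  have hsum := sum_edgeProb_eq N M hM c hc hcN v
  -- convert to hf form
  have conv1 : ∑ i ∈ Icc 1 M, (1:ℝ)/i = ∑ i ∈ Icc 1 M, hf i := rfl
  have conv2 : ∑ i ∈ Icc 1 M, ∑ j ∈ Icc 1 M, (1:ℝ)/(i+j)
      = ∑ i ∈ Icc 1 M, ∑ j ∈ Icc 1 M, hf (i+j) := by
    apply Finset.sum_congr rfl; intro i _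
    apply Finset.sum_congr rfl; intro j _
    unfold hf; push_cast; ring
  rw [conv1, conv2, key_identity' M] at hsum
  have hSm : ∑ k ∈ Icc (M+1) (2*M), hf k = Sm M := rfl
  rw [hSm, ← hNr] at hsum
  have hsum2 : ∑ u : Vtx N, edgeProb N c v u = 4*c*Sm M := by
    rw [hsum]; field_simp
  have hdiff : (∑ u : Vtx N, edgeProb N c v u)
      - (4 * c * Real.log 2 - 2 * c / (N : ℝ) - c / (N : ℝ) ^ 2)
      = 4*c*(Dseq M - Real.log 2) := by
    rw [hsum2]
    unfold Dseq
    rw [← hNr]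
    field_simp
    ring
  rw [hdiff, abs_mul, abs_of_nonneg (by positivity : (0:ℝ) ≤ 4*c)]
  have hclose := Dseq_close M hM1
  have hMr : (1:ℝ) ≤ (M:ℝ) := by exact_mod_cast hM1
  have hN3M : (N:ℝ) ≤ 3*(M:ℝ) := by rw [hNr]; linarith
  have hM0 : (0:ℝ) < (M:ℝ) := by linarith
  have hpow : (N:ℝ)^4 ≤ 81*(M:ℝ)^4 := by
    calc (N:ℝ)^4 ≤ (3*(M:ℝ))^4 := by
          apply pow_le_pow_left₀ (le_of_lt hN0) hN3M
      _ = 81*(M:ℝ)^4 := by ring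
  have hfinal : 4*c*(1/4 * (1/(M:ℝ)^4)) ≤ 81*c / (N:ℝ)^4 := by
    have e : 4*c*(1/4 * (1/(M:ℝ)^4)) = c/(M:ℝ)^4 := by ring
    rw [e, div_le_div_iff₀ (by positivity) (by positivity)]
    nlinarith [mul_le_mul_of_nonneg_left hpow (le_of_lt hc)]
  calc 4*c * |Dseq M - Real.log 2| ≤ 4*c*(1/4 * (1/(M:ℝ)^4)) := by
        apply mul_le_mul_of_nonneg_left hclose (by positivity)
    _ ≤ 81*c / (N:ℝ)^4 := hfinal
end

section
/- Fix c > 0. There exist a constant C₀ > 0 and N₀ such that for every even integer N ≥ N₀ and every vertex v ∈ V_N, the sum Σ_{u ∈ V_N} p(v,u) satisfies |Σ_{u ∈ V_N} p(v,u) − (4c·log 2 − 2c/N − 2c/N²)| ≤ C₀/N⁴. -/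
open scoped BigOperators
open Finset Filter Topology

noncomputable def hsum (n : ℕ) : ℝ := ∑ i ∈ Finset.range n, ((i : ℝ) + 1)⁻¹

lemma hsum_succ (n : ℕ) : hsum (n+1) = hsum n + ((n : ℝ) + 1)⁻¹ := by
  simp [hsum, Finset.sum_range_succ]

lemma hsum_sumharm (n : ℕ) : ∑ j ∈ Finset.range n, hsum j = n * hsum n - n := by
  induction n with
  | zero => simp
  | succ n ih =>
    rw [Finset.sum_range_succ, ih, hsum_succ]
    have h : ((n : ℝ) + 1) ≠ 0 := by positivity
    push_cast
    field_simp
    ring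

lemma hsum_block (a b : ℕ) :
    ∑ i ∈ Finset.range b, ((a + i + 1 : ℕ) : ℝ)⁻¹ = hsum (a + b) - hsum a := by
  induction b with
  | zero => simp
  | succ b ih =>
    rw [Finset.sum_range_succ, ih, show a + (b+1) = (a+b) + 1 from rfl, hsum_succ]
    push_cast
    ring

lemma hsum_shm (t p : ℕ) :
    ∑ a ∈ Finset.range p, hsum (a + t) = (p + t) * hsum (p + t) - t * hsum t - p := by
  have h1 : ∑ a ∈ Finset.range p, hsum (a + t)
      = ∑ j ∈ Finset.range (t + p), hsum j - ∑ j ∈ Finset.range t, hsum j := by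
    induction p with
    | zero => simp
    | succ p ih =>
      rw [Finset.sum_range_succ, ih, show t + (p+1) = (t+p)+1 from rfl,
        Finset.sum_range_succ, show p + t = t + p from Nat.add_comm p t]
      ring
  rw [h1, hsum_sumharm, hsum_sumharm, show t + p = p + t from Nat.add_comm t p]
  push_cast
  ring

lemma rect_sum (t p q : ℕ) :
    ∑ a ∈ Finset.range p, ∑ b ∈ Finset.range q, ((a + b + t + 1 : ℕ) : ℝ)⁻¹
      = (p + q + t) * hsum (p + q + t) - (q + t) * hsum (q + t)
        - (p + t) * hsum (p + t) + t * hsum t := by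
  have inner : ∀ a, ∑ b ∈ Finset.range q, ((a + b + t + 1 : ℕ) : ℝ)⁻¹
      = hsum ((a + t) + q) - hsum (a + t) := by
    intro a
    rw [← hsum_block (a + t) q]
    apply Finset.sum_congr rfl
    intro b _
    congr 2
    omega
  simp only [inner]
  rw [Finset.sum_sub_distrib]
  have e1 : ∀ a : ℕ, (a + t) + q = a + (t + q) := by omega
  simp only [e1]
  rw [hsum_shm (t + q) p, hsum_shm t p,
    show p + (t + q) = p + q + t by omega, show t + q = q + t from Nat.add_comm t q]
  push_cast
  ring
lemma red (k : ℕ) (F : ℕ → ℝ) :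
    ∑ i ∈ Finset.range (2*(k+1)), F (if 2*i ≤ 2*(k+1) then i else 2*(k+1) - i)
      = ∑ i ∈ Finset.range (k+2), F i + ∑ i ∈ Finset.range k, F (i+1) := by
  have hsplit : ∑ i ∈ Finset.Ico 0 (k+2), F (if 2*i ≤ 2*(k+1) then i else 2*(k+1) - i)
      + ∑ i ∈ Finset.Ico (k+2) (2*(k+1)), F (if 2*i ≤ 2*(k+1) then i else 2*(k+1) - i)
      = ∑ i ∈ Finset.Ico 0 (2*(k+1)), F (if 2*i ≤ 2*(k+1) then i else 2*(k+1) - i) :=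
    Finset.sum_Ico_consecutive _ (by omega) (by omega)
  rw [Finset.range_eq_Ico, ← hsplit]
  congr 1
  · rw [← Finset.range_eq_Ico]
    apply Finset.sum_congr rfl
    intro i hi
    rw [if_pos (by simp at hi; omega)]
  · refine Finset.sum_nbij' (i := fun a => 2*(k+1) - a - 1) (j := fun b => 2*(k+1) - (b+1))
      ?_ ?_ ?_ ?_ ?_
    · intro a ha; simp at ha ⊢; omega
    · intro b hb; simp at hb ⊢; omega
    · intro a ha; simp at ha; beta_reduce; omega
    · intro b hb; simp at hb; beta_reduce; omega
    · intro a ha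
      simp at ha
      rw [if_neg (by omega)]
      beta_reduce
      congr 1
      omega

lemma Sval (k : ℕ) :
    ∑ i ∈ Finset.range (2*(k+1)), ∑ j ∈ Finset.range (2*(k+1)),
        (((if 2*i ≤ 2*(k+1) then i else 2*(k+1) - i)
          + (if 2*j ≤ 2*(k+1) then j else 2*(k+1) - j) : ℕ) : ℝ)⁻¹
      = 8*(k+1) * (hsum (2*(k+1)) - hsum (k+1)) - 3/(2*(k+1)) := by
  have inner : ∀ a : ℕ,
      ∑ j ∈ Finset.range (2*(k+1)),
          ((a + (if 2*j ≤ 2*(k+1) then j else 2*(k+1) - j) : ℕ) : ℝ)⁻¹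
        = ∑ b ∈ Finset.range (k+2), ((a + b : ℕ) : ℝ)⁻¹
          + ∑ b ∈ Finset.range k, ((a + (b+1) : ℕ) : ℝ)⁻¹ := by
    intro a
    exact red k (fun b => ((a + b : ℕ) : ℝ)⁻¹)
  have h2 := red k (fun a => ∑ b ∈ Finset.range (k+2), ((a + b : ℕ) : ℝ)⁻¹
          + ∑ b ∈ Finset.range k, ((a + (b+1) : ℕ) : ℝ)⁻¹)
  beta_reduce at h2
  simp only [inner]
  rw [h2]
  rw [Finset.sum_add_distrib, Finset.sum_add_distrib]
  have T00 : ∑ a ∈ Finset.range (k+2), ∑ b ∈ Finset.range (k+2), ((a + b : ℕ) : ℝ)⁻¹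
      = (∑ a ∈ Finset.range (k+1), ∑ b ∈ Finset.range (k+2), ((a + b + 0 + 1 : ℕ) : ℝ)⁻¹)
        + hsum (k+1) := by
    rw [Finset.sum_range_succ']
    congr 1
    · apply Finset.sum_congr rfl; intro a _
      apply Finset.sum_congr rfl; intro b _
      have e : a + 1 + b = a + b + 0 + 1 := by omega
      rw [e]
    · rw [Finset.sum_range_succ']
      simp [hsum]
  have T01 : ∑ a ∈ Finset.range (k+2), ∑ b ∈ Finset.range k, ((a + (b + 1) : ℕ) : ℝ)⁻¹
      = ∑ a ∈ Finset.range (k+2), ∑ b ∈ Finset.range k, ((a + b + 0 + 1 : ℕ) : ℝ)⁻¹ := by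
    apply Finset.sum_congr rfl; intro a _
    apply Finset.sum_congr rfl; intro b _
    have e : a + (b + 1) = a + b + 0 + 1 := by omega
    rw [e]
  have T10 : ∑ a ∈ Finset.range k, ∑ b ∈ Finset.range (k+2), ((a + 1 + b : ℕ) : ℝ)⁻¹
      = ∑ a ∈ Finset.range k, ∑ b ∈ Finset.range (k+2), ((a + b + 0 + 1 : ℕ) : ℝ)⁻¹ := by
    apply Finset.sum_congr rfl; intro a _
    apply Finset.sum_congr rfl; intro b _
    have e : a + 1 + b = a + b + 0 + 1 := by omega
    rw [e]
  have T11 : ∑ a ∈ Finset.range k, ∑ b ∈ Finset.range k, ((a + 1 + (b + 1) : ℕ) : ℝ)⁻¹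
      = ∑ a ∈ Finset.range k, ∑ b ∈ Finset.range k, ((a + b + 1 + 1 : ℕ) : ℝ)⁻¹ := by
    apply Finset.sum_congr rfl; intro a _
    apply Finset.sum_congr rfl; intro b _
    have e : a + 1 + (b + 1) = a + b + 1 + 1 := by omega
    rw [e]
  rw [T00, T01, T10, T11, rect_sum 0 (k+1) (k+2), rect_sum 0 (k+2) k,
    rect_sum 0 k (k+2), rect_sum 1 k k]
  simp only [show k+1+(k+2)+0 = 2*k+3 from by omega, show (k+2)+0 = k+2 from by omega,
    show (k+1)+0 = k+1 from by omega, show (k+2)+k+0 = 2*k+2 from by omega,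
    show k+0 = k from by omega, show k+(k+2)+0 = 2*k+2 from by omega,
    show k+k+1 = 2*k+1 from by omega, show 2*(k+1) = 2*k+2 from by omega]
  have hs1 : hsum (2*k+3) = hsum (2*k+2) + (2*(k:ℝ)+3)⁻¹ := by
    have := hsum_succ (2*k+2)
    rw [show 2*k+2+1 = 2*k+3 from by omega] at this
    push_cast at this ⊢; ring_nf at this ⊢; linarith
  have hs2 : hsum (2*k+2) = hsum (2*k+1) + (2*(k:ℝ)+2)⁻¹ := by
    have := hsum_succ (2*k+1)
    rw [show 2*k+1+1 = 2*k+2 from by omega] at this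
    push_cast at this ⊢; ring_nf at this ⊢; linarith
  have hs3 : hsum (k+2) = hsum (k+1) + ((k:ℝ)+2)⁻¹ := by
    have := hsum_succ (k+1)
    rw [show k+1+1 = k+2 from by omega] at this
    push_cast at this ⊢; ring_nf at this ⊢; linarith
  have hs4 : hsum (k+1) = hsum k + ((k:ℝ)+1)⁻¹ := hsum_succ k
  have hs5 : hsum 1 = (1:ℝ) := by simp [hsum]
  have hs0 : hsum 0 = (0:ℝ) := by simp [hsum]
  rw [hs1, hs2, hs3, hs4, hs5, hs0]
  have p1 : ((k : ℝ) + 1) ≠ 0 := by positivity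
  have p2 : ((k : ℝ) + 2) ≠ 0 := by positivity
  have p3 : (2*(k : ℝ) + 2) ≠ 0 := by positivity
  have p4 : (2*(k : ℝ) + 3) ≠ 0 := by positivity
  push_cast
  field_simp
  ring
lemma zmod_sum {N : ℕ} [NeZero N] (g : ℕ → ℝ) :
    ∑ x : ZMod N, g (ZMod.val x) = ∑ i ∈ Finset.range N, g i := by
  refine Finset.sum_nbij' (i := fun x => ZMod.val x) (j := fun i => (i : ZMod N))
    ?_ ?_ ?_ ?_ ?_
  · intro x _; simp [ZMod.val_lt]
  · intro i _; simp
  · intro x _; beta_reduce; exact ZMod.natCast_rightInverse x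
  · intro i hi; simp at hi; beta_reduce; exact ZMod.val_cast_of_lt hi
  · intro x _; rfl

lemma rho_pos {N : ℕ} [NeZero N] {x : ZMod N} (hx : x ≠ 0) : 1 ≤ rhoN N x := by
  have h1 : x.val < N := ZMod.val_lt x
  have h2 : x.val ≠ 0 := by
    intro h
    exact hx (by rwa [ZMod.val_eq_zero] at h)
  unfold rhoN
  split <;> omega

lemma rho_zero (N : ℕ) : rhoN N 0 = 0 := by
  simp [rhoN, ZMod.val_zero]

lemma key (c : ℝ) (hc : 0 ≤ c) (N : ℕ) [NeZero N] (hcN : c ≤ N) (v : Vtx N) :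
    ∑ u : Vtx N, edgeProb N c v u
      = (c / N) * ∑ i ∈ Finset.range N, ∑ j ∈ Finset.range N,
          (((if 2*i ≤ N then i else N - i) + (if 2*j ≤ N then j else N - j) : ℕ) : ℝ)⁻¹ := by
  have hN0 : (0:ℝ) < N := by
    have := Nat.pos_of_ne_zero (NeZero.ne N)
    exact_mod_cast this
  have step1 : ∑ u : Vtx N, edgeProb N c v u
      = ∑ w : Vtx N, (c / N) * ((rhoN N w.1 + rhoN N w.2 : ℕ) : ℝ)⁻¹ := by
    apply Fintype.sum_equiv (Equiv.subLeft v)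
    intro u
    simp only [Equiv.subLeft_apply]
    by_cases h : v = u
    · subst h
      simp [edgeProb, rho_zero]
    · rw [edgeProb, if_neg h]
      have hd : 1 ≤ torusDist N v u := by
        have : v.1 - u.1 ≠ 0 ∨ v.2 - u.2 ≠ 0 := by
          by_contra hcon
          push_neg at hcon
          apply h
          have h1 : v.1 = u.1 := by have := hcon.1; rwa [sub_eq_zero] at this
          have h2 : v.2 = u.2 := by have := hcon.2; rwa [sub_eq_zero] at this
          exact Prod.ext h1 h2
        unfold torusDist
        rcases this with h' | h'
        · have := rho_pos h'; omega
        · have := rho_pos h'; omega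
      have hdR : (1:ℝ) ≤ (torusDist N v u : ℝ) := by exact_mod_cast hd
      have hmin : min (c / ((N : ℝ) * (torusDist N v u : ℝ))) 1
          = c / ((N : ℝ) * (torusDist N v u : ℝ)) := by
        apply min_eq_left
        rw [div_le_one (by positivity)]
        calc c ≤ (N:ℝ) := hcN
        _ = N * 1 := by ring
        _ ≤ (N:ℝ) * (torusDist N v u : ℝ) := by
            apply mul_le_mul_of_nonneg_left hdR (le_of_lt hN0)
      rw [hmin]
      have : torusDist N v u = rhoN N ((v-u).1) + rhoN N ((v-u).2) := rfl
      rw [this]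
      rw [div_mul_eq_div_div]
      rw [div_eq_mul_inv (c / N)]
  rw [step1, Fintype.sum_prod_type]
  simp only [← Finset.mul_sum]
  congr 1
  have inner : ∀ x : ZMod N, ∑ y : ZMod N, ((rhoN N x + rhoN N y : ℕ) : ℝ)⁻¹
      = ∑ j ∈ Finset.range N,
          ((rhoN N x + (if 2*j ≤ N then j else N - j) : ℕ) : ℝ)⁻¹ := by
    intro x
    exact zmod_sum (fun j => ((rhoN N x + (if 2*j ≤ N then j else N - j) : ℕ) : ℝ)⁻¹)
  calc ∑ x : ZMod N, ∑ y : ZMod N, ((rhoN N x + rhoN N y : ℕ) : ℝ)⁻¹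
      = ∑ x : ZMod N, ∑ j ∈ Finset.range N,
          (((if 2*(ZMod.val x) ≤ N then (ZMod.val x) else N - (ZMod.val x))
            + (if 2*j ≤ N then j else N - j) : ℕ) : ℝ)⁻¹ := by
        apply Finset.sum_congr rfl
        intro x _
        exact inner x
    _ = _ := zmod_sum (fun i => ∑ j ∈ Finset.range N,
          (((if 2*i ≤ N then i else N - i) + (if 2*j ≤ N then j else N - j) : ℕ) : ℝ)⁻¹)
noncomputable def gfun (x : ℝ) : ℝ := 1/(4*x) - 1/(16*x^2)
noncomputable def Efun (m : ℕ) : ℝ := Real.log 2 - (hsum (2*m) - hsum m) - gfun m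

lemma hsum_eq_harmonic (n : ℕ) : hsum n = ((harmonic n : ℚ) : ℝ) := by
  induction n with
  | zero => simp [hsum]
  | succ n ih => rw [hsum_succ, harmonic_succ, ih]; push_cast; ring

lemma tendD : Tendsto (fun m : ℕ => hsum (2*m) - hsum m) atTop (𝓝 (Real.log 2)) := by
  have hγ := Real.tendsto_harmonic_sub_log
  have h2 : Tendsto (fun m : ℕ => 2*m) atTop atTop :=
    Filter.tendsto_atTop_atTop.mpr (fun b => ⟨b, fun a ha => by omega⟩)
  have h2m : Tendsto (fun m : ℕ => ((harmonic (2*m) : ℚ) : ℝ) - Real.log (2*m : ℕ))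
      atTop (𝓝 Real.eulerMascheroniConstant) := hγ.comp h2
  have hfin : Tendsto (fun m : ℕ =>
      (((harmonic (2*m) : ℚ) : ℝ) - Real.log (2*m : ℕ))
        - (((harmonic m : ℚ) : ℝ) - Real.log m) + Real.log 2) atTop
      (𝓝 (Real.eulerMascheroniConstant - Real.eulerMascheroniConstant + Real.log 2)) :=
    (h2m.sub hγ).add_const _
  rw [show Real.eulerMascheroniConstant - Real.eulerMascheroniConstant + Real.log 2
    = Real.log 2 by ring] at hfin
  apply hfin.congr'
  filter_upwards [eventually_ge_atTop 1] with m hm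
  have hm0 : ((m:ℝ)) ≠ 0 := by positivity
  have : Real.log (2*m : ℕ) = Real.log 2 + Real.log m := by
    push_cast
    rw [Real.log_mul (by norm_num) hm0]
  rw [this, hsum_eq_harmonic, hsum_eq_harmonic]
  ring

lemma Ediff (m : ℕ) (hm : 1 ≤ m) :
    Efun m - Efun (m+1)
      = 1 / (16 * (m:ℝ)^2 * ((m:ℝ)+1)^2 * (2*(m:ℝ)+1)) := by
  have e1 : hsum (2*(m+1)) = hsum (2*m) + (2*(m:ℝ)+1)⁻¹ + (2*(m:ℝ)+2)⁻¹ := by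
    rw [show 2*(m+1) = (2*m+1)+1 from by omega, hsum_succ, hsum_succ]
    push_cast; ring
  have e2 : hsum (m+1) = hsum m + ((m:ℝ)+1)⁻¹ := hsum_succ m
  have hx : (0:ℝ) < (m:ℝ) := by exact_mod_cast hm
  rw [Efun, Efun, e1, e2, gfun, gfun]
  have h1 : ((m:ℝ)+1) ≠ 0 := by positivity
  have h2 : (2*(m:ℝ)+1) ≠ 0 := by positivity
  have h3 : (2*(m:ℝ)+2) ≠ 0 := by positivity
  have h4 : (m:ℝ) ≠ 0 := ne_of_gt hx
  push_cast
  field_simp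
  ring

lemma Ediff_nonneg (m : ℕ) (hm : 1 ≤ m) : 0 ≤ Efun m - Efun (m+1) := by
  rw [Ediff m hm]
  have hx : (0:ℝ) < (m:ℝ) := by exact_mod_cast hm
  positivity

lemma Ediff_le (m : ℕ) (hm : 2 ≤ m) :
    Efun m - Efun (m+1)
      ≤ (1/64) * (((m:ℝ)-1)⁻¹^4 - ((m:ℝ))⁻¹^4) := by
  rw [Ediff m (by omega)]
  have hx2 : (2:ℝ) ≤ (m:ℝ) := by exact_mod_cast hm
  have hx : (0:ℝ) < (m:ℝ) := by linarith
  have hy : (0:ℝ) ≤ (m:ℝ) - 2 := by linarith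
  have hx1 : (0:ℝ) < (m:ℝ) - 1 := by linarith
  set x : ℝ := (m:ℝ)
  have key : (1/64) * ((x-1)⁻¹^4 - x⁻¹^4) - 1 / (16 * x^2 * (x+1)^2 * (2*x+1))
      = (42176 + 163776*(x-2) + 275824*(x-2)^2 + 262016*(x-2)^3 + 152656*(x-2)^4
          + 55392*(x-2)^5 + 12064*(x-2)^6 + 1408*(x-2)^7 + 64*(x-2)^8)
        / (64 * (x-1)^4 * x^4 * 16 * x^2 * (x+1)^2 * (2*x+1)) := by
    have h1 : (x-1) ≠ 0 := ne_of_gt hx1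
    have h2 : x ≠ 0 := ne_of_gt hx
    have h3 : (x+1) ≠ 0 := by positivity
    have h4 : (2*x+1) ≠ 0 := by positivity
    field_simp
    ring
  have hnum : (0:ℝ) ≤ (42176 + 163776*(x-2) + 275824*(x-2)^2 + 262016*(x-2)^3
      + 152656*(x-2)^4 + 55392*(x-2)^5 + 12064*(x-2)^6 + 1408*(x-2)^7 + 64*(x-2)^8) := by
    positivity
  have hden : (0:ℝ) < 64 * (x-1)^4 * x^4 * 16 * x^2 * (x+1)^2 * (2*x+1) := by positivity
  nlinarith [div_nonneg hnum (le_of_lt hden), key]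

lemma gfun_tendsto : Tendsto (fun M : ℕ => gfun M) atTop (𝓝 0) := by
  have t : Tendsto (fun n : ℕ => 1 / (n:ℝ)) atTop (𝓝 0) := tendsto_one_div_atTop_nhds_zero_nat
  have h : Tendsto (fun M : ℕ => (1/4) * (1/(M:ℝ)) - (1/16) * ((1/(M:ℝ)) * (1/(M:ℝ))))
      atTop (𝓝 ((1/4) * 0 - (1/16) * (0 * 0))) :=
    (t.const_mul (1/4)).sub ((t.mul t).const_mul (1/16))
  rw [show (1/4 : ℝ) * 0 - (1/16) * (0 * 0) = 0 by ring] at h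
  apply h.congr
  intro M
  simp only [gfun, one_div, mul_inv, sq]

lemma Efun_tendsto : Tendsto (fun M : ℕ => Efun M) atTop (𝓝 0) := by
  have h : Tendsto (fun M : ℕ => Real.log 2 - (hsum (2*M) - hsum M) - gfun M)
      atTop (𝓝 (Real.log 2 - Real.log 2 - 0)) :=
    ((tendsto_const_nhds.sub tendD).sub gfun_tendsto)
  rw [show Real.log 2 - Real.log 2 - 0 = (0:ℝ) by ring] at h
  exact h

lemma Ebound (m : ℕ) (hm : 2 ≤ m) : |Efun m| ≤ (1/64) * (((m:ℝ)-1)⁻¹)^4 := by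
  set φ : ℕ → ℝ := fun i => (1/64) * (((i:ℝ)-1)⁻¹)^4 with hφ
  have hφ_nonneg : ∀ i, 0 ≤ φ i := by intro i; rw [hφ]; positivity
  have hstep : ∀ M, m ≤ M → |Efun m| - φ m ≤ |Efun M| := by
    intro M hM
    have tele : Efun m - Efun M = ∑ i ∈ Finset.Ico m M, (Efun i - Efun (i+1)) := by
      rw [Finset.sum_Ico_eq_sub _ hM, Finset.sum_range_sub' Efun, Finset.sum_range_sub' Efun]
      ring
    have teleφ : ∑ i ∈ Finset.Ico m M, (φ i - φ (i+1)) = φ m - φ M := by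
      rw [Finset.sum_Ico_eq_sub _ hM, Finset.sum_range_sub' φ, Finset.sum_range_sub' φ]
      ring
    have hnn : 0 ≤ Efun m - Efun M := by
      rw [tele]
      apply Finset.sum_nonneg
      intro i hi
      simp only [Finset.mem_Ico] at hi
      exact Ediff_nonneg i (by omega)
    have hle : Efun m - Efun M ≤ φ m - φ M := by
      rw [tele, ← teleφ]
      apply Finset.sum_le_sum
      intro i hi
      simp only [Finset.mem_Ico] at hi
      have h1 := Ediff_le i (by omega)
      have h2 : φ i - φ (i+1) = (1/64) * (((i:ℝ)-1)⁻¹^4 - ((i:ℝ))⁻¹^4) := by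
        rw [hφ]
        beta_reduce
        push_cast
        ring
      rw [h2]
      exact h1
    have : |Efun m| ≤ |Efun M| + (Efun m - Efun M) := by
      have := abs_sub_abs_le_abs_sub (Efun m) (Efun M)
      rw [abs_of_nonneg hnn] at *
      calc |Efun m| = |Efun M| + (|Efun m| - |Efun M|) := by ring
        _ ≤ |Efun M| + |Efun m - Efun M| := by linarith [abs_sub_abs_le_abs_sub (Efun m) (Efun M)]
        _ = |Efun M| + (Efun m - Efun M) := by rw [abs_of_nonneg hnn]
    have hφM := hφ_nonneg M
    linarith
  have hlim : Tendsto (fun M : ℕ => |Efun M|) atTop (𝓝 0) := by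
    have := Efun_tendsto.abs
    simpa using this
  have : |Efun m| - φ m ≤ 0 := by
    apply ge_of_tendsto hlim
    filter_upwards [eventually_ge_atTop m] with M hM
    exact hstep M hM
  have h2 : φ m = 1/64 * (((m:ℝ)-1)⁻¹)^4 := rfl
  linarith

/-- For `c > 0` there are `C₀ > 0` and `N₀` such that for every even `N ≥ N₀` and every
vertex `v`, `|Σ_{u} p(v,u) − (4c·log 2 − 2c/N − 2c/N²)| ≤ C₀/N⁴`. -/
theorem stmt3 (c : ℝ) (hc : 0 < c) :
    ∃ C₀ : ℝ, 0 < C₀ ∧ ∃ N₀ : ℕ, ∀ (N : ℕ) [NeZero N], N₀ ≤ N → Even N →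
      ∀ v : Vtx N,
        |(∑ u : Vtx N, edgeProb N c v u) -
            (4 * c * Real.log 2 - 2 * c / (N : ℝ) - 2 * c / (N : ℝ) ^ 2)| ≤
          C₀ / (N : ℝ) ^ 4 := by
  refine ⟨16 * c, by positivity, max 4 (Nat.ceil c), ?_⟩
  intro N _ hN₀ hEv v
  have h4N : 4 ≤ N := le_trans (le_max_left _ _) hN₀
  have hcN : c ≤ (N : ℝ) := by
    have h1 : c ≤ (Nat.ceil c : ℝ) := Nat.le_ceil c
    have h2 : (Nat.ceil c : ℝ) ≤ (N : ℝ) := by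
      exact_mod_cast le_trans (le_max_right 4 (Nat.ceil c)) hN₀
    linarith
  obtain ⟨r, hr⟩ := hEv
  obtain ⟨k, rfl⟩ : ∃ k, r = k + 1 := ⟨r - 1, by omega⟩
  have hk1 : 1 ≤ k := by omega
  have hN : N = 2 * (k + 1) := by omega
  rw [key c hc.le N hcN v]
  simp only [hN]
  rw [Sval k]
  have hkR : (1 : ℝ) ≤ (k : ℝ) := by exact_mod_cast hk1
  have hm0 : ((k : ℝ) + 1) ≠ 0 := by positivity
  have hE : Real.log 2 = (hsum (2*(k+1)) - hsum (k+1)) + gfun (k+1) + Efun (k+1) := by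
    rw [Efun]; push_cast; ring
  have habs : (c / ((2*(k+1) : ℕ) : ℝ)) *
        (8*((k:ℝ)+1) * (hsum (2*(k+1)) - hsum (k+1)) - 3/(2*((k:ℝ)+1)))
        - (4 * c * Real.log 2 - 2 * c / ((2*(k+1) : ℕ) : ℝ)
            - 2 * c / ((2*(k+1) : ℕ) : ℝ) ^ 2)
      = (-4) * c * Efun (k+1) := by
    simp only [Efun, gfun]
    push_cast
    field_simp
    ring
  rw [habs]
  have hEb : |Efun (k+1)| ≤ (1/64) * ((k:ℝ)⁻¹)^4 := by
    have := Ebound (k+1) (by omega)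
    have e : (((k+1 : ℕ) : ℝ) - 1) = (k : ℝ) := by push_cast; ring
    rwa [e] at this
  have habs2 : |(-4) * c * Efun (k+1)| = 4 * c * |Efun (k+1)| := by
    rw [abs_mul, abs_mul]
    simp [abs_of_pos hc]
  rw [habs2]
  have hkpos : (0:ℝ) < (k:ℝ) := by linarith
  calc 4 * c * |Efun (k+1)| ≤ 4 * c * ((1/64) * ((k:ℝ)⁻¹)^4) := by
        apply mul_le_mul_of_nonneg_left hEb (by positivity)
    _ = c / (16 * (k:ℝ)^4) := by
        rw [inv_pow]
        have : (k:ℝ) ≠ 0 := by linarith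
        field_simp
        ring
    _ ≤ 16 * c / (((2*(k+1) : ℕ) : ℝ)) ^ 4 := by
        rw [div_le_div_iff₀ (by positivity) (by positivity)]
        have hc' : 0 < c := hc
        push_cast
        nlinarith [sq_nonneg ((k:ℝ) - 1), sq_nonneg ((k:ℝ)^2 - 1), pow_pos hkpos 4,
          mul_pos hc' (pow_pos hkpos 4)]
end

section
/- Fix c > 0. There exists N₀ such that for every integer N ≥ N₀, every vertex v ∈ V_N and every subset A ⊆ V_N ∖ {v}, one has c·|A|/N² ≤ Σ_{u ∈ A} p(v,u) ≤ 4c·√|A|/N. -/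
open scoped BigOperators

open Finset

section Aux

variable (N : ℕ) [NeZero N]

lemma rhoN_le_half (i : ZMod N) : rhoN N i ≤ N / 2 := by
  have := ZMod.val_lt i
  unfold rhoN; split <;> omega

lemma rhoN_eq_zero {i : ZMod N} (h : rhoN N i = 0) : i = 0 := by
  have hv := ZMod.val_lt i
  have : i.val = 0 := by unfold rhoN at h; split at h <;> omega
  exact (ZMod.val_eq_zero i).mp this

lemma torusDist_pos {u v : Vtx N} (h : u ≠ v) : 1 ≤ torusDist N u v := by
  rcases Nat.eq_zero_or_pos (torusDist N u v) with h0 | h1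
  · exfalso
    unfold torusDist at h0
    have h1 : rhoN N (u.1 - v.1) = 0 := by omega
    have h2 : rhoN N (u.2 - v.2) = 0 := by omega
    have e1 : u.1 = v.1 := by have := rhoN_eq_zero N h1; rwa [sub_eq_zero] at this
    have e2 : u.2 = v.2 := by have := rhoN_eq_zero N h2; rwa [sub_eq_zero] at this
    exact h (Prod.ext e1 e2)
  · exact h1

lemma torusDist_le (u v : Vtx N) : torusDist N u v ≤ N := by
  have h1 := rhoN_le_half N (u.1 - v.1)
  have h2 := rhoN_le_half N (u.2 - v.2)
  unfold torusDist; omega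

lemma card_fiber (j : ℕ) :
    (univ.filter fun a : ZMod N => rhoN N a = j).card ≤ 2 := by
  classical
  have hsub : (univ.filter fun a : ZMod N => rhoN N a = j) ⊆ {(j : ZMod N), ((N - j : ℕ) : ZMod N)} := by
    intro a ha
    simp only [mem_filter, mem_univ, true_and] at ha
    have hv := ZMod.val_lt a
    have : a.val = j ∨ a.val = N - j := by unfold rhoN at ha; split at ha <;> omega
    have hc : ((a.val : ℕ) : ZMod N) = a := ZMod.natCast_rightInverse a
    rcases this with h | h <;> simp [mem_insert, ← h, hc]
  calc (univ.filter fun a : ZMod N => rhoN N a = j).card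
      ≤ ({(j : ZMod N), ((N - j : ℕ) : ZMod N)} : Finset (ZMod N)).card := card_le_card hsub
    _ ≤ 2 := card_insert_le _ _ |>.trans (by simp)

lemma card_fiber_zero :
    (univ.filter fun a : ZMod N => rhoN N a = 0).card ≤ 1 := by
  classical
  have hsub : (univ.filter fun a : ZMod N => rhoN N a = 0) ⊆ {(0 : ZMod N)} := by
    intro a ha
    simp only [mem_filter, mem_univ, true_and] at ha
    simp [rhoN_eq_zero N ha]
  exact (card_le_card hsub).trans (by simp)

lemma card_shell0 {r : ℕ} (hr : 1 ≤ r) :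
    (univ.filter fun w : Vtx N => rhoN N w.1 + rhoN N w.2 = r).card ≤ 4 * r := by
  classical
  obtain ⟨m, rfl⟩ : ∃ m, r = m + 1 := ⟨r - 1, by omega⟩
  set r := m + 1 with hrdef
  set t : ℕ → ℕ := fun j => (univ.filter fun a : ZMod N => rhoN N a = j).card with ht
  have hsub : (univ.filter fun w : Vtx N => rhoN N w.1 + rhoN N w.2 = r)
      ⊆ (range (r+1)).biUnion (fun j =>
          (univ.filter fun a : ZMod N => rhoN N a = j) ×ˢ
          (univ.filter fun a : ZMod N => rhoN N a = r - j)) := by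
    intro w hw
    simp only [mem_filter, mem_univ, true_and] at hw
    refine mem_biUnion.mpr ⟨rhoN N w.1, mem_range.mpr (by omega), ?_⟩
    simp only [mem_product, mem_filter, mem_univ, true_and]
    omega
  have h1 : (univ.filter fun w : Vtx N => rhoN N w.1 + rhoN N w.2 = r).card
      ≤ ∑ j ∈ range (r+1), t j * t (r - j) := by
    refine (card_le_card hsub).trans (card_biUnion_le.trans (le_of_eq (by simp [card_product, ht])))
  refine h1.trans ?_
  have hsum : ∑ j ∈ range (r+1), t j * t (r - j)
      = (∑ j ∈ range m, t (j+1) * t (r - (j+1)) + t r * t (r - r)) + t 0 * t (r - 0) := by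
    rw [Finset.sum_range_succ' (fun j => t j * t (r - j)) r, Finset.sum_range_succ]
  rw [hsum]
  have h0 : t 0 ≤ 1 := card_fiber_zero N
  have hr2 : t r ≤ 2 := card_fiber N r
  have hmid : ∑ j ∈ range m, t (j+1) * t (r - (j+1)) ≤ m * 4 := by
    refine (Finset.sum_le_card_nsmul _ _ 4 ?_).trans (by simp [mul_comm])
    intro j _
    calc t (j+1) * t (r - (j+1)) ≤ 2 * 2 := Nat.mul_le_mul (card_fiber N _) (card_fiber N _)
      _ = 4 := rfl
  have e1 : t r * t (r - r) ≤ 2 := by simpa using Nat.mul_le_mul hr2 h0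
  have e2 : t 0 * t (r - 0) ≤ 2 := by simpa using Nat.mul_le_mul h0 hr2
  omega

lemma card_shell (v : Vtx N) {r : ℕ} (hr : 1 ≤ r) :
    (univ.filter fun u : Vtx N => torusDist N v u = r).card ≤ 4 * r := by
  classical
  refine le_trans ?_ (card_shell0 N hr)
  apply Finset.card_le_card_of_injOn (fun u => (v.1 - u.1, v.2 - u.2))
  · intro u hu
    simp only [mem_coe, mem_filter, mem_univ, true_and] at hu ⊢
    exact hu
  · intro a _ b _ h
    simp only [Prod.mk.injEq] at h
    have h1 : a.1 = b.1 := sub_right_injective h.1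
    have h2 : a.2 = b.2 := sub_right_injective h.2
    exact Prod.ext h1 h2

lemma ball_sum (v : Vtx N) (R : ℕ) :
    ∑ u ∈ univ.filter (fun u : Vtx N => 1 ≤ torusDist N v u ∧ torusDist N v u ≤ R),
      (1 / (torusDist N v u : ℝ)) ≤ 4 * R := by
  classical
  set s := univ.filter (fun u : Vtx N => 1 ≤ torusDist N v u ∧ torusDist N v u ≤ R) with hs
  have hmap : ∀ u ∈ s, torusDist N v u ∈ Finset.Icc 1 R := by
    intro u hu; simp only [hs, mem_filter] at hu; exact Finset.mem_Icc.mpr hu.2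
  rw [← Finset.sum_fiberwise_of_maps_to hmap (fun u => (1 / (torusDist N v u : ℝ)))]
  calc ∑ r ∈ Finset.Icc 1 R, ∑ u ∈ s.filter (fun u => torusDist N v u = r), (1 / (torusDist N v u : ℝ))
      ≤ ∑ r ∈ Finset.Icc 1 R, (4 : ℝ) := by
        refine Finset.sum_le_sum ?_
        intro r hr
        have hr1 : 1 ≤ r := (Finset.mem_Icc.mp hr).1
        have hcard : (s.filter (fun u => torusDist N v u = r)).card ≤ 4 * r := by
          refine le_trans (card_le_card ?_) (card_shell N v hr1)
          intro u hu
          simp only [hs, mem_filter, mem_univ, true_and] at hu ⊢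
          exact hu.2
        have : ∑ u ∈ s.filter (fun u => torusDist N v u = r), (1 / (torusDist N v u : ℝ))
            = (s.filter (fun u => torusDist N v u = r)).card * (1 / (r : ℝ)) := by
          rw [Finset.sum_congr rfl (fun u hu => by
            simp only [mem_filter] at hu
            rw [hu.2]), Finset.sum_const, nsmul_eq_mul]
        rw [this]
        have hrpos : (0:ℝ) < r := by exact_mod_cast hr1
        rw [mul_one_div, div_le_iff₀ hrpos]
        calc ((s.filter (fun u => torusDist N v u = r)).card : ℝ) ≤ ((4 * r : ℕ) : ℝ) := by
              exact_mod_cast hcard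
          _ = 4 * r := by push_cast; ring
    _ ≤ 4 * R := by
        rw [Finset.sum_const, nsmul_eq_mul]
        have : (Finset.Icc 1 R).card = R := by simp
        rw [this, mul_comm]

end Aux

/-- For `c > 0` there is `N₀` such that for every `N ≥ N₀`, every vertex `v` and every
subset `A ⊆ V_N ∖ {v}`, `c·|A|/N² ≤ Σ_{u ∈ A} p(v,u) ≤ 4c·√|A|/N`. -/
theorem stmt6 (c : ℝ) (hc : 0 < c) :
    ∃ N₀ : ℕ, ∀ (N : ℕ) [NeZero N], N₀ ≤ N →
      ∀ v : Vtx N, ∀ A : Finset (Vtx N), v ∉ A →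
        c * (A.card : ℝ) / (N : ℝ) ^ 2 ≤ ∑ u ∈ A, edgeProb N c v u ∧
        ∑ u ∈ A, edgeProb N c v u ≤ 4 * c * Real.sqrt (A.card : ℝ) / (N : ℝ) := by
  classical
  refine ⟨⌈c⌉₊, fun N _ hN v A hvA => ?_⟩
  have hNc : c ≤ (N : ℝ) := by
    have := Nat.ceil_le.mp hN
    exact_mod_cast Nat.ceil_le.mp (le_refl _) |>.trans (by exact_mod_cast hN)
  have hN1 : 1 ≤ N := Nat.one_le_iff_ne_zero.mpr (NeZero.ne N)
  have hNpos : (0:ℝ) < N := by exact_mod_cast hN1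
  have hvu : ∀ u ∈ A, v ≠ u := fun u hu h => hvA (h ▸ hu)
  have hd1 : ∀ u ∈ A, 1 ≤ torusDist N v u := fun u hu => torusDist_pos N (hvu u hu)
  constructor
  · -- lower bound
    have hlow : ∀ u ∈ A, c / (N:ℝ)^2 ≤ edgeProb N c v u := by
      intro u hu
      have hd1' := hd1 u hu
      have hdN := torusDist_le N v u
      rw [edgeProb, if_neg (hvu u hu)]
      have hdpos : (0:ℝ) < (torusDist N v u : ℝ) := by exact_mod_cast hd1'
      refine le_min ?_ ?_
      · apply div_le_div_of_nonneg_left hc.le (by positivity)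
        calc (N:ℝ) * (torusDist N v u : ℝ) ≤ (N:ℝ) * (N:ℝ) := by
              apply mul_le_mul_of_nonneg_left (by exact_mod_cast hdN) hNpos.le
          _ = (N:ℝ)^2 := (sq (N:ℝ)).symm
      · rw [div_le_one (by positivity)]
        have hN1' : (1:ℝ) ≤ N := by exact_mod_cast hN1
        nlinarith [hNc, hN1']
    calc c * (A.card : ℝ) / (N:ℝ)^2 = A.card • (c / (N:ℝ)^2) := by
          rw [nsmul_eq_mul]; ring
      _ ≤ ∑ u ∈ A, edgeProb N c v u := Finset.card_nsmul_le_sum A _ _ hlow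
  · -- upper bound
    rcases Nat.eq_zero_or_pos A.card with hk0 | hk1
    · rw [Finset.card_eq_zero.mp hk0]
      simp [Real.sqrt_zero]
    set k := A.card with hk
    set sK := Real.sqrt k with hsK
    have hkpos : (0:ℝ) < k := by exact_mod_cast hk1
    have hs1 : 1 ≤ sK := by
      rw [hsK]; rw [show (1:ℝ) = Real.sqrt 1 by simp]
      exact Real.sqrt_le_sqrt (by exact_mod_cast hk1)
    have hspos : (0:ℝ) < sK := lt_of_lt_of_le one_pos hs1
    have hsq : sK^2 = k := Real.sq_sqrt hkpos.le
    set R := ⌊sK / 2⌋₊ with hR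
    have hRle : (R:ℝ) ≤ sK/2 := Nat.floor_le (by positivity)
    have hRlt : sK/2 < (R:ℝ)+1 := Nat.lt_floor_add_one _
    -- step 1: bound edgeProb by c/(N d)
    have step1 : ∑ u ∈ A, edgeProb N c v u ≤ ∑ u ∈ A, c / ((N:ℝ) * (torusDist N v u : ℝ)) := by
      refine Finset.sum_le_sum fun u hu => ?_
      rw [edgeProb, if_neg (hvu u hu)]
      exact min_le_left _ _
    refine step1.trans ?_
    -- split
    rw [← Finset.sum_filter_add_sum_filter_not A (fun u => torusDist N v u ≤ R)]
    have hnear : ∑ u ∈ A.filter (fun u => torusDist N v u ≤ R), c / ((N:ℝ) * (torusDist N v u : ℝ))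
        ≤ (c / N) * (4 * R) := by
      have heq : ∀ u ∈ A.filter (fun u => torusDist N v u ≤ R),
          c / ((N:ℝ) * (torusDist N v u : ℝ)) = (c / N) * (1 / (torusDist N v u : ℝ)) := by
        intro u hu; field_simp
      rw [Finset.sum_congr rfl heq, ← Finset.mul_sum]
      apply mul_le_mul_of_nonneg_left _ (by positivity)
      refine le_trans (Finset.sum_le_sum_of_subset_of_nonneg ?_ ?_) (ball_sum N v R)
      · intro u hu
        simp only [mem_filter, mem_univ, true_and] at hu ⊢
        exact ⟨hd1 u hu.1, hu.2⟩
      · intro u _ _; positivity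
    have hfar : ∑ u ∈ A.filter (fun u => ¬ torusDist N v u ≤ R), c / ((N:ℝ) * (torusDist N v u : ℝ))
        ≤ k * (c / ((N:ℝ) * ((R:ℝ)+1))) := by
      refine le_trans (Finset.sum_le_card_nsmul _ _ (c / ((N:ℝ) * ((R:ℝ)+1))) ?_) ?_
      · intro u hu
        simp only [mem_filter] at hu
        have hdR : (R:ℝ)+1 ≤ (torusDist N v u : ℝ) := by
          have : R + 1 ≤ torusDist N v u := by omega
          exact_mod_cast this
        apply div_le_div_of_nonneg_left hc.le (by positivity)
        apply mul_le_mul_of_nonneg_left hdR hNpos.le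
      · rw [nsmul_eq_mul]
        apply mul_le_mul_of_nonneg_right _ (by positivity)
        exact_mod_cast Finset.card_filter_le A _
    refine (add_le_add hnear hfar).trans ?_
    -- final arithmetic
    have key : 4 * (R:ℝ) + k / ((R:ℝ)+1) ≤ 4 * sK := by
      have h1 : 4 * (R:ℝ) ≤ 2 * sK := by linarith
      have h2 : (k:ℝ) / ((R:ℝ)+1) ≤ 2 * sK := by
        have hhalf : (0:ℝ) < sK / 2 := by positivity
        calc (k:ℝ) / ((R:ℝ)+1) ≤ (k:ℝ) / (sK/2) :=
              div_le_div_of_nonneg_left hkpos.le hhalf hRlt.le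
          _ = 2 * sK := by rw [← hsq]; field_simp
      linarith
    have : (c / N) * (4 * R) + k * (c / ((N:ℝ) * ((R:ℝ)+1)))
        = (c / N) * (4 * (R:ℝ) + k / ((R:ℝ)+1)) := by
      field_simp
    rw [this]
    calc (c / N) * (4 * (R:ℝ) + k / ((R:ℝ)+1)) ≤ (c / N) * (4 * sK) := by
          apply mul_le_mul_of_nonneg_left key (by positivity)
      _ = 4 * c * sK / N := by ring
end
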